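/- Let n ≥ 2, 1 ≤ k ≤ n−1, and let λ : {1,…,n} → Bool be a word taking the value true at exactly k positions. Then there exists a cup diagram M that is oriented for λ and admissible for λ with |M| = min(k, n−k). -/
import Mathlib


/-- A cup diagram on `{0,…,n-1}`: a finite set `M` of pairs `(i,j)` with `i < j`,
with pairwise disjoint endpoints, non-crossing, and such that every position
strictly between the endpoints of a cup is itself an endpoint of some cup. -/
def IsCupDiagram {n : ℕ} (M : Finset (Fin n × Fin n)) : Prop :=
  (∀ p ∈ M, p.1 < p.2) ∧
  (∀ p ∈ M, ∀ q ∈ M, p ≠ q →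
    p.1 ≠ q.1 ∧ p.1 ≠ q.2 ∧ p.2 ≠ q.1 ∧ p.2 ≠ q.2) ∧
  (∀ p ∈ M, ∀ q ∈ M, ¬(p.1 < q.1 ∧ q.1 < p.2 ∧ p.2 < q.2)) ∧
  (∀ p ∈ M, ∀ l : Fin n, p.1 < l → l < p.2 → ∃ q ∈ M, l = q.1 ∨ l = q.2)

/-- A position is free if it is not an endpoint of any pair of `M`. -/
def IsFree {n : ℕ} (M : Finset (Fin n × Fin n)) (l : Fin n) : Prop :=
  ∀ p ∈ M, p.1 ≠ l ∧ p.2 ≠ l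

/-- `M` is oriented for the word `λ` if the two endpoints of each cup carry
different letters. -/
def OrientedFor {n : ℕ} (lam : Fin n → Bool) (M : Finset (Fin n × Fin n)) : Prop :=
  ∀ p ∈ M, lam p.1 ≠ lam p.2

/-- The degree of `M` for `λ`: the number of cups `(i,j)` with `λ(i) = true`
(clockwise cups). -/
def cupDegree {n : ℕ} (lam : Fin n → Bool) (M : Finset (Fin n × Fin n)) : ℕ :=
  (M.filter (fun p => lam p.1 = true)).card

/-- `M` is admissible for `λ` if there are no free positions `i < j` with
`λ(i) = false` (`∨`) and `λ(j) = true` (`∧`). -/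
def AdmissibleFor {n : ℕ} (lam : Fin n → Bool) (M : Finset (Fin n × Fin n)) : Prop :=
  ∀ i j : Fin n, i < j → IsFree M i → IsFree M j → ¬(lam i = false ∧ lam j = true)

/-- The embedding of `{0,…,n-3}` into `{0,…,n-1}` skipping positions `i` and `i+1`. -/
private def cupEmb (n i : ℕ) (hi : i + 1 < n) (j : Fin (n - 2)) : Fin n :=
  if (j : ℕ) < i then ⟨(j : ℕ), by have := j.isLt; omega⟩
  else ⟨(j : ℕ) + 2, by have := j.isLt; omega⟩

private lemma cupEmb_val (n i : ℕ) (hi : i + 1 < n) (j : Fin (n - 2)) :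
    ((cupEmb n i hi j) : ℕ) = if (j : ℕ) < i then (j : ℕ) else (j : ℕ) + 2 := by
  unfold cupEmb; split <;> rfl

private lemma cupEmb_ne (n i : ℕ) (hi : i + 1 < n) (j : Fin (n - 2)) :
    ((cupEmb n i hi j) : ℕ) ≠ i ∧ ((cupEmb n i hi j) : ℕ) ≠ i + 1 := by
  rw [cupEmb_val]; split <;> omega

private lemma cupEmb_lt_iff (n i : ℕ) (hi : i + 1 < n) (j1 j2 : Fin (n - 2)) :
    cupEmb n i hi j1 < cupEmb n i hi j2 ↔ j1 < j2 := by
  rw [Fin.lt_def, Fin.lt_def, cupEmb_val, cupEmb_val]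
  split <;> split <;> omega

private lemma cupEmb_inj (n i : ℕ) (hi : i + 1 < n) {j1 j2 : Fin (n - 2)}
    (h : cupEmb n i hi j1 = cupEmb n i hi j2) : j1 = j2 := by
  have h' := congrArg Fin.val h
  rw [cupEmb_val, cupEmb_val] at h'
  apply Fin.ext
  revert h'; split <;> split <;> omega

private lemma cupEmb_surj (n i : ℕ) (hi : i + 1 < n) (m : Fin n)
    (h1 : (m : ℕ) ≠ i) (h2 : (m : ℕ) ≠ i + 1) : ∃ j, cupEmb n i hi j = m := by
  by_cases hm : (m : ℕ) < i
  · refine ⟨⟨(m : ℕ), by omega⟩, ?_⟩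
    apply Fin.ext; rw [cupEmb_val]; simp [hm]
  · have hm2 : i + 2 ≤ (m : ℕ) := by omega
    refine ⟨⟨(m : ℕ) - 2, by have := m.isLt; omega⟩, ?_⟩
    apply Fin.ext; rw [cupEmb_val]
    rw [if_neg (by simp; omega)]
    simp; omega

private lemma exists_adjacent_ne {n : ℕ} (lam : Fin n → Bool)
    (a b : Fin n) (hab : lam a ≠ lam b) :
    ∃ i : ℕ, ∃ h : i + 1 < n, lam ⟨i, by omega⟩ ≠ lam ⟨i + 1, h⟩ := by
  by_contra hc
  push_neg at hc
  have h0 : 0 < n := by have := a.isLt; omega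
  have key : ∀ j : ℕ, (hj : j < n) → lam ⟨j, hj⟩ = lam ⟨0, h0⟩ := by
    intro j
    induction j with
    | zero => intro hj; rfl
    | succ m ih =>
      intro hj
      have h1 : m + 1 < n := hj
      have h2 := hc m h1
      rw [← h2]
      exact ih (by omega)
  apply hab
  have ha := key a.1 a.2
  have hb := key b.1 b.2
  simp only [Fin.eta] at ha hb
  rw [ha, hb]

private lemma cup_aux : ∀ n : ℕ, ∀ lam : Fin n → Bool, ∀ k : ℕ,
    (Finset.univ.filter (fun i => lam i = true)).card = k →
    ∃ M : Finset (Fin n × Fin n),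
      IsCupDiagram M ∧ OrientedFor lam M ∧ AdmissibleFor lam M ∧
      M.card = min k (n - k) := by
  intro n
  induction n using Nat.strong_induction_on with
  | _ n IH =>
  intro lam k hk
  by_cases hk0 : k = 0
  · subst hk0
    have hall : ∀ m : Fin n, lam m = false := by
      intro m
      by_contra hm
      rw [Finset.card_eq_zero] at hk
      have : m ∈ Finset.univ.filter (fun i => lam i = true) := by
        simp only [Finset.mem_filter, Finset.mem_univ, true_and]
        simpa using hm
      simp [hk] at this
    refine ⟨∅, ⟨by simp, by simp, by simp, by simp⟩, by intro p hp; simp at hp,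
      ?_, by simp⟩
    intro i j _ _ _ h; rw [hall j] at h; simp at h
  by_cases hkn : k = n
  · have hall : ∀ m : Fin n, lam m = true := by
      have huniv : Finset.univ.filter (fun i => lam i = true) = Finset.univ :=
        Finset.eq_univ_of_card _ (by rw [hk]; simp [hkn])
      intro m
      have hm : m ∈ Finset.univ.filter (fun i => lam i = true) := by
        rw [huniv]; exact Finset.mem_univ m
      exact (Finset.mem_filter.mp hm).2
    refine ⟨∅, ⟨by simp, by simp, by simp, by simp⟩, by intro p hp; simp at hp,
      ?_, by simp [hkn]⟩
    intro i j _ _ _ h; rw [hall i] at h; simp at h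
  -- main case : 0 < k < n
  have hkle : k ≤ n := by
    have := Finset.card_filter_le Finset.univ (fun i => lam i = true)
    simpa [hk] using this
  have hkpos : 0 < k := Nat.pos_of_ne_zero hk0
  have hklt : k < n := lt_of_le_of_ne hkle hkn
  obtain ⟨a, ha⟩ : ∃ a : Fin n, lam a = true := by
    have hne : (Finset.univ.filter (fun i => lam i = true)).Nonempty := by
      rw [← Finset.card_pos, hk]; exact hkpos
    obtain ⟨a, ha⟩ := hne
    exact ⟨a, (Finset.mem_filter.mp ha).2⟩
  obtain ⟨b, hb⟩ : ∃ b : Fin n, lam b = false := by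
    by_contra hc
    push_neg at hc
    have huniv : Finset.univ.filter (fun i => lam i = true) = Finset.univ := by
      apply Finset.eq_univ_of_forall
      intro m
      simp only [Finset.mem_filter, Finset.mem_univ, true_and]
      cases h : lam m
      · exact absurd h (hc m)
      · rfl
    rw [huniv] at hk; simp at hk; omega
  obtain ⟨i, hi, hne⟩ := exists_adjacent_ne lam a b (by rw [ha, hb]; simp)
  set fi : Fin n := ⟨i, by omega⟩ with hfi
  set fi1 : Fin n := ⟨i + 1, hi⟩ with hfi1
  set e : Fin (n - 2) → Fin n := cupEmb n i hi with he
  have hene : ∀ j : Fin (n - 2), fi ≠ e j ∧ fi1 ≠ e j := by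
    intro j
    constructor <;> intro h
    · exact (cupEmb_ne n i hi j).1 (congrArg Fin.val h).symm
    · exact (cupEmb_ne n i hi j).2 (congrArg Fin.val h).symm
  -- counting
  have himg : (Finset.univ.filter (fun j => lam (e j) = true)).image e
      = (Finset.univ.filter (fun m => lam m = true)) \ {fi, fi1} := by
    ext m
    simp only [Finset.mem_image, Finset.mem_filter, Finset.mem_sdiff,
      Finset.mem_insert, Finset.mem_singleton, Finset.mem_univ, true_and]
    constructor
    · rintro ⟨j, hj, rfl⟩
      refine ⟨hj, ?_⟩
      push_neg
      exact ⟨fun h => (hene j).1 h.symm, fun h => (hene j).2 h.symm⟩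
    · rintro ⟨hm, hm2⟩
      push_neg at hm2
      obtain ⟨j, hj⟩ := cupEmb_surj n i hi m
        (fun h => hm2.1 (Fin.ext h)) (fun h => hm2.2 (Fin.ext h))
      exact ⟨j, by rw [show e j = m from hj]; exact hm, hj⟩
  have hcard1 : (Finset.univ.filter (fun j => lam (e j) = true)).card = k - 1 := by
    have hinj : Set.InjOn e ↑(Finset.univ.filter (fun j => lam (e j) = true)) :=
      fun x _ y _ h => cupEmb_inj n i hi h
    have h1 := Finset.card_image_of_injOn hinj
    rw [himg] at h1
    rw [← h1]
    have hsd : (Finset.univ.filter (fun m => lam m = true)) \ {fi, fi1}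
        = ((Finset.univ.filter (fun m => lam m = true)).erase fi).erase fi1 := by
      ext m
      simp only [Finset.mem_sdiff, Finset.mem_insert, Finset.mem_singleton,
        Finset.mem_erase]
      tauto
    rw [hsd]
    cases hlfi : lam fi
    · -- lam fi = false, lam fi1 = true
      have hlfi1 : lam fi1 = true := by
        cases h : lam fi1
        · exact absurd (hlfi.trans h.symm) hne
        · rfl
      have h2 : (Finset.univ.filter (fun m => lam m = true)).erase fi
          = Finset.univ.filter (fun m => lam m = true) := by
        apply Finset.erase_eq_of_notMem
        simp [hlfi]
      rw [h2, Finset.card_erase_of_mem (by simp [hlfi1]), hk]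
    · -- lam fi = true, lam fi1 = false
      have hlfi1 : lam fi1 = false := by
        cases h : lam fi1
        · rfl
        · exact absurd (hlfi.trans h.symm) hne
      have h2 : ((Finset.univ.filter (fun m => lam m = true)).erase fi).erase fi1
          = (Finset.univ.filter (fun m => lam m = true)).erase fi := by
        apply Finset.erase_eq_of_notMem
        simp [hlfi1]
      rw [h2, Finset.card_erase_of_mem (by simp [hlfi]), hk]
  obtain ⟨M', hcup', hor', hadm', hcard'⟩ :=
    IH (n - 2) (by omega) (fun j => lam (e j)) (k - 1) hcard1
  set M : Finset (Fin n × Fin n) :=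
    insert (fi, fi1) (M'.image (fun p => (e p.1, e p.2))) with hM
  have hmem : ∀ p, p ∈ M ↔ p = (fi, fi1) ∨ ∃ q ∈ M', p = (e q.1, e q.2) := by
    intro p
    rw [hM, Finset.mem_insert, Finset.mem_image]
    constructor
    · rintro (h | ⟨q, hq, h⟩)
      · exact Or.inl h
      · exact Or.inr ⟨q, hq, h.symm⟩
    · rintro (h | ⟨q, hq, h⟩)
      · exact Or.inl h
      · exact Or.inr ⟨q, hq, h.symm⟩
  refine ⟨M, ⟨?_, ?_, ?_, ?_⟩, ?_, ?_, ?_⟩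
  · -- (i) p.1 < p.2
    intro p hp
    rcases (hmem p).mp hp with h | ⟨q, hq, h⟩
    · subst h; rw [Fin.lt_def]; simp [hfi, hfi1]
    · subst h; exact (cupEmb_lt_iff n i hi _ _).2 (hcup'.1 q hq)
  · -- (ii) distinct endpoints
    intro p hp q hq hpq
    rcases (hmem p).mp hp with h1 | ⟨r1, hr1, h1⟩ <;>
      rcases (hmem q).mp hq with h2 | ⟨r2, hr2, h2⟩
    · exact absurd (h1.trans h2.symm) hpq
    · subst h1; subst h2
      refine ⟨?_, ?_, ?_, ?_⟩ <;> simp only []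
      · exact (hene r2.1).1
      · exact (hene r2.2).1
      · exact (hene r2.1).2
      · exact (hene r2.2).2
    · subst h1; subst h2
      refine ⟨?_, ?_, ?_, ?_⟩ <;> simp only []
      · exact fun h => (hene r1.1).1 h.symm
      · exact fun h => (hene r1.1).2 h.symm
      · exact fun h => (hene r1.2).1 h.symm
      · exact fun h => (hene r1.2).2 h.symm
    · subst h1; subst h2
      have hrne : r1 ≠ r2 := by
        intro h; apply hpq; rw [h]
      obtain ⟨c1, c2, c3, c4⟩ := hcup'.2.1 r1 hr1 r2 hr2 hrne
      refine ⟨?_, ?_, ?_, ?_⟩ <;> simp only [] <;> intro h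
      · exact c1 (cupEmb_inj n i hi h)
      · exact c2 (cupEmb_inj n i hi h)
      · exact c3 (cupEmb_inj n i hi h)
      · exact c4 (cupEmb_inj n i hi h)
  · -- (iii) non-crossing
    intro p hp q hq
    rcases (hmem p).mp hp with h1 | ⟨r1, hr1, h1⟩ <;>
      rcases (hmem q).mp hq with h2 | ⟨r2, hr2, h2⟩
    · subst h1; subst h2
      rintro ⟨c1, _, _⟩
      exact lt_irrefl _ c1
    · subst h1; subst h2
      rintro ⟨c1, c2, _⟩
      rw [Fin.lt_def] at c1 c2
      rw [cupEmb_val] at c1 c2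
      simp only [hfi, hfi1] at c1 c2
      revert c1 c2; split <;> omega
    · subst h1; subst h2
      rintro ⟨_, c2, c3⟩
      rw [Fin.lt_def] at c2 c3
      rw [cupEmb_val] at c2 c3
      simp only [hfi, hfi1] at c2 c3
      revert c2 c3; split <;> omega
    · subst h1; subst h2
      rintro ⟨c1, c2, c3⟩
      rw [cupEmb_lt_iff] at c1 c2 c3
      exact hcup'.2.2.1 r1 hr1 r2 hr2 ⟨c1, c2, c3⟩
  · -- (iv) interval condition
    intro p hp l hl1 hl2
    rcases (hmem p).mp hp with h1 | ⟨r, hr, h1⟩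
    · subst h1
      exfalso
      rw [Fin.lt_def] at hl1 hl2
      simp only [hfi, hfi1] at hl1 hl2
      omega
    · subst h1
      by_cases hli : (l : ℕ) = i
      · refine ⟨(fi, fi1), (hmem _).mpr (Or.inl rfl), Or.inl (Fin.ext hli)⟩
      by_cases hli1 : (l : ℕ) = i + 1
      · refine ⟨(fi, fi1), (hmem _).mpr (Or.inl rfl), Or.inr (Fin.ext hli1)⟩
      obtain ⟨j, hj⟩ := cupEmb_surj n i hi l hli hli1
      rw [← hj] at hl1 hl2
      rw [cupEmb_lt_iff] at hl1 hl2
      obtain ⟨q', hq', hq'2⟩ := hcup'.2.2.2 r hr j hl1 hl2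
      refine ⟨(e q'.1, e q'.2), (hmem _).mpr (Or.inr ⟨q', hq', rfl⟩), ?_⟩
      rcases hq'2 with h | h
      · exact Or.inl (by rw [← hj, h])
      · exact Or.inr (by rw [← hj, h])
  · -- oriented
    intro p hp
    rcases (hmem p).mp hp with h1 | ⟨r, hr, h1⟩
    · subst h1; exact hne
    · subst h1; exact hor' r hr
  · -- admissible
    intro x y hxy hfx hfy
    have hx0 := hfx (fi, fi1) (by rw [hM]; exact Finset.mem_insert_self _ _)
    have hy0 := hfy (fi, fi1) (by rw [hM]; exact Finset.mem_insert_self _ _)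
    obtain ⟨jx, hjx⟩ := cupEmb_surj n i hi x
      (fun h => hx0.1 (Fin.ext h.symm)) (fun h => hx0.2 (Fin.ext h.symm))
    obtain ⟨jy, hjy⟩ := cupEmb_surj n i hi y
      (fun h => hy0.1 (Fin.ext h.symm)) (fun h => hy0.2 (Fin.ext h.symm))
    rw [← he] at hjx hjy
    have hfx' : IsFree M' jx := by
      intro q hq
      have := hfx (e q.1, e q.2) ((hmem _).mpr (Or.inr ⟨q, hq, rfl⟩))
      constructor
      · intro h; exact this.1 (by rw [h, hjx])
      · intro h; exact this.2 (by rw [h, hjx])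
    have hfy' : IsFree M' jy := by
      intro q hq
      have := hfy (e q.1, e q.2) ((hmem _).mpr (Or.inr ⟨q, hq, rfl⟩))
      constructor
      · intro h; exact this.1 (by rw [h, hjy])
      · intro h; exact this.2 (by rw [h, hjy])
    have hjxy : jx < jy := by
      have : e jx < e jy := by rw [hjx, hjy]; exact hxy
      rw [he, cupEmb_lt_iff] at this; exact this
    have := hadm' jx jy hjxy hfx' hfy'
    intro h
    apply this
    constructor
    · show lam (e jx) = false
      rw [hjx]; exact h.1
    · show lam (e jy) = true
      rw [hjy]; exact h.2
  · -- cardinality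
    have hnotmem : (fi, fi1) ∉ M'.image (fun p => (e p.1, e p.2)) := by
      intro h
      rw [Finset.mem_image] at h
      obtain ⟨q, _, hq⟩ := h
      exact (hene q.1).1 (congrArg Prod.fst hq).symm
    have hinj2 : Set.InjOn (fun p : Fin (n-2) × Fin (n-2) => (e p.1, e p.2)) ↑M' := by
      intro x _ y _ h
      exact Prod.ext (cupEmb_inj n i hi (congrArg Prod.fst h))
        (cupEmb_inj n i hi (congrArg Prod.snd h))
    rw [hM, Finset.card_insert_of_notMem hnotmem, Finset.card_image_of_injOn hinj2,
      hcard']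
    omega

/-- For every word `λ` with exactly `k` letters `∧` (`true`) there exists a cup
diagram `M` oriented and admissible for `λ` with exactly `min(k, n-k)` cups. -/
theorem stmt15 (n k : ℕ) (hn : 2 ≤ n) (hk1 : 1 ≤ k) (hk2 : k ≤ n - 1)
    (lam : Fin n → Bool)
    (hlam : (Finset.univ.filter (fun i => lam i = true)).card = k) :
    ∃ M : Finset (Fin n × Fin n),
      IsCupDiagram M ∧ OrientedFor lam M ∧ AdmissibleFor lam M ∧
      M.card = min k (n - k) := by
  exact cup_aux n lam k hlam
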